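/- Let S be a finite set with |S| ≥ 2, let φ_s : ℝ → ℝ for each s ∈ S, and let Φ(u)_s = φ_s(u_s). Suppose NWD(X,S,U) ⊆ NWD(X,S,Φ∘U) for every nonempty finite X and every U : X × S → ℝ. Then either (i) each φ_s is concave and strictly increasing, or (ii) every φ_s is constant. -/

import Mathlib

open Finset

def IsDist {X : Type} [Fintype X] (p : X → ℝ) : Prop :=
  (∀ x, 0 ≤ p x) ∧ (∑ x, p x) = 1

def NSD {X S : Type} [Fintype X] (S' : Set S) (U : X → S → ℝ) : Set X :=
  {x | ¬ ∃ p : X → ℝ, IsDist p ∧ ∀ s ∈ S', (∑ y, U y s * p y) > U x s}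

def NWD {X S : Type} [Fintype X] (S' : Set S) (U : X → S → ℝ) : Set X :=
  {x | ¬ ∃ p : X → ℝ, IsDist p ∧ (∀ s ∈ S', (∑ y, U y s * p y) ≥ U x s) ∧
      (∃ s ∈ S', (∑ y, U y s * p y) > U x s)}

def NSDhat {X S : Type} (S' : Set S) (U : X → S → ℝ) : Set X :=
  {x | ¬ ∃ y : X, ∀ s ∈ S', U y s > U x s}

def NWDhat {X S : Type} (S' : Set S) (U : X → S → ℝ) : Set X :=
  {x | ¬ ∃ y : X, (∀ s ∈ S', U y s ≥ U x s) ∧ (∃ s ∈ S', U y s > U x s)}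

/-! ### Auxiliary analytic lemmas -/

lemma chainLemma (φ : ℝ → ℝ) (h01 : φ 0 < φ 1) (h12 : φ 1 < φ 2)
    {ρ : ℝ} (hρ : 1 < ρ) :
    ∃ c h : ℝ, 0 < h ∧ φ c - φ (c - h) ≤ ρ * (φ (c + h) - φ c) := by
  by_contra hcon
  push_neg at hcon
  obtain ⟨n, hn⟩ := pow_unbounded_of_one_lt ((φ 1 - φ 0) / (φ 2 - φ 1)) hρ
  set N := n + 1 with hN
  clear_value N
  have hNpos : (0:ℝ) < (N:ℝ) := by exact_mod_cast Nat.pos_of_ne_zero (by omega)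
  set g : ℕ → ℝ := fun j => φ (2 - j / N) - φ (2 - (j+1) / N) with hg
  have hstep : ∀ j : ℕ, ρ * g j < g (j+1) := by
    intro j
    have := hcon (2 - (j+1)/N) (1/N) (by positivity)
    have e1 : (2 - (j+1)/(N:ℝ)) + 1/N = 2 - j/N := by field_simp; ring
    have e2 : (2 - (j+1)/(N:ℝ)) - 1/N = 2 - (j+1+1)/N := by field_simp; ring
    rw [e1, e2] at this
    simp only [hg]
    push_cast
    convert this using 3 <;> push_cast <;> ring
  have hiter : ∀ j k : ℕ, ρ ^ k * g j ≤ g (j + k) := by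
    intro j k
    induction k with
    | zero => simp
    | succ k ih =>
      have h1 : ρ ^ (k+1) * g j = ρ * (ρ ^ k * g j) := by ring
      rw [h1]
      calc ρ * (ρ ^ k * g j) ≤ ρ * g (j + k) := by
            apply mul_le_mul_of_nonneg_left ih (by linarith)
        _ ≤ g (j + k + 1) := (hstep (j+k)).le
  have sum1 : ∑ j ∈ range N, g j = φ 2 - φ 1 := by
    have h := Finset.sum_range_sub' (fun j => φ (2 - j / (N:ℝ))) N
    push_cast at h
    have e1 : (2:ℝ) - 0/N = 2 := by norm_num
    have e2 : (2:ℝ) - (N:ℝ)/N = 1 := by rw [div_self hNpos.ne']; norm_num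
    rw [e1, e2] at h
    exact h
  have sum2 : ∑ j ∈ range N, g (N + j) = φ 1 - φ 0 := by
    have h := Finset.sum_range_sub' (fun j => φ (2 - ((N:ℝ) + j) / (N:ℝ))) N
    push_cast at h
    have e1 : (2:ℝ) - ((N:ℝ) + 0)/N = 1 := by field_simp; ring
    have e2 : (2:ℝ) - ((N:ℝ) + N)/N = 0 := by field_simp; ring
    rw [e1, e2] at h
    rw [← h]
    apply Finset.sum_congr rfl
    intro j _
    simp only [hg]
    push_cast
    ring_nf
  have hsum_le : ρ ^ N * (φ 2 - φ 1) ≤ φ 1 - φ 0 := by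
    rw [← sum1, ← sum2, Finset.mul_sum]
    apply Finset.sum_le_sum
    intro j _
    exact hiter j N |>.trans_eq (by rw [Nat.add_comm])
  have hgt : (φ 1 - φ 0) / (φ 2 - φ 1) < ρ ^ N := by
    calc (φ 1 - φ 0) / (φ 2 - φ 1) < ρ ^ n := hn
      _ ≤ ρ ^ N := pow_le_pow_right₀ (by linarith) (by omega)
  have h21 : (0:ℝ) < φ 2 - φ 1 := by linarith
  rw [div_lt_iff₀ h21] at hgt
  nlinarith

lemma dyadic_ineq {φ : ℝ → ℝ}
    (hmid : ∀ x y : ℝ, (φ x + φ y) / 2 ≤ φ ((x + y) / 2)) :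
    ∀ n k : ℕ, k ≤ 2^n → ∀ x y : ℝ,
      ((k:ℝ)/2^n) * φ x + (1 - (k:ℝ)/2^n) * φ y ≤ φ (((k:ℝ)/2^n) * x + (1 - (k:ℝ)/2^n) * y) := by
  intro n
  induction n with
  | zero =>
    intro k hk x y
    interval_cases k <;> norm_num
  | succ n ih =>
    intro k hk x y
    have h2n : (0:ℝ) < 2^n := by positivity
    set i := k / 2 with hi
    set j := k - i with hj
    have hij : i + j = k := by omega
    have hi' : i ≤ 2^n := by
      have : 2^(n+1) = 2 * 2^n := by ring
      omega
    have hj' : j ≤ 2^n := by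
      have : 2^(n+1) = 2 * 2^n := by ring
      omega
    have Hi := ih i hi' x y
    have Hj := ih j hj' x y
    have Hmid := hmid (((i:ℝ)/2^n) * x + (1 - (i:ℝ)/2^n) * y)
      (((j:ℝ)/2^n) * x + (1 - (j:ℝ)/2^n) * y)
    have hk' : ((i:ℝ) + (j:ℝ)) = (k:ℝ) := by exact_mod_cast congrArg (Nat.cast (R := ℝ)) hij
    have ept : ((((i:ℝ)/2^n) * x + (1 - (i:ℝ)/2^n) * y) +
        (((j:ℝ)/2^n) * x + (1 - (j:ℝ)/2^n) * y)) / 2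
        = ((k:ℝ)/2^(n+1)) * x + (1 - (k:ℝ)/2^(n+1)) * y := by
      rw [← hk']
      field_simp
      ring
    rw [ept] at Hmid
    have heq : ((k:ℝ)/2^(n+1)) * φ x + (1 - (k:ℝ)/2^(n+1)) * φ y
        = ((((i:ℝ)/2^n) * φ x + (1 - (i:ℝ)/2^n) * φ y) +
           (((j:ℝ)/2^n) * φ x + (1 - (j:ℝ)/2^n) * φ y)) / 2 := by
      rw [← hk']
      field_simp
      ring
    rw [heq]
    calc _ ≤ (φ (((i:ℝ)/2^n) * x + (1 - (i:ℝ)/2^n) * y) +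
           φ (((j:ℝ)/2^n) * x + (1 - (j:ℝ)/2^n) * y)) / 2 := by linarith
      _ ≤ _ := Hmid

lemma midpoint_concave {φ : ℝ → ℝ} (hm : Monotone φ)
    (hmid : ∀ x y : ℝ, (φ x + φ y) / 2 ≤ φ ((x + y) / 2)) :
    ConcaveOn ℝ Set.univ φ := by
  have key : ∀ x y : ℝ, x ≤ y → ∀ a : ℝ, 0 ≤ a → a ≤ 1 →
      a * φ x + (1 - a) * φ y ≤ φ (a * x + (1 - a) * y) := by
    intro x y hxy a ha ha1
    apply le_of_forall_pos_le_add
    intro ε hε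
    have hφxy : φ x ≤ φ y := hm hxy
    set δ : ℝ := ε / (φ y - φ x + 1) with hδ
    have hδpos : 0 < δ := by
      apply div_pos hε; linarith
    obtain ⟨n, hn⟩ := exists_pow_lt_of_lt_one hδpos (by norm_num : (1/2:ℝ) < 1)
    have h2n : (0:ℝ) < 2^n := by positivity
    set k : ℕ := ⌈a * 2^n⌉₊ with hk
    have hk1 : a * 2^n ≤ (k:ℝ) := Nat.le_ceil _
    have hk2 : (k:ℝ) < a * 2^n + 1 := Nat.ceil_lt_add_one (by positivity)
    have hkle : k ≤ 2^n := by
      have : a * 2^n ≤ ((2^n : ℕ) : ℝ) := by push_cast; nlinarith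
      exact Nat.ceil_le.mpr this
    set q : ℝ := (k:ℝ) / 2^n with hq
    have hqa : a ≤ q := by rw [hq, le_div_iff₀ h2n]; linarith
    have hqd : q < a + δ := by
      rw [hq, div_lt_iff₀ h2n]
      have e : (1/2:ℝ)^n = 1/2^n := by rw [div_pow]; norm_num
      rw [e] at hn
      have : 1 < δ * 2^n := by
        rw [div_lt_iff₀ h2n] at hn
        linarith [hn]
      nlinarith
    have hdy := dyadic_ineq hmid n k hkle x y
    rw [← hq] at hdy
    have hpt : q * x + (1 - q) * y ≤ a * x + (1 - a) * y := by nlinarith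
    have h1 : φ (q * x + (1 - q) * y) ≤ φ (a * x + (1 - a) * y) := hm hpt
    have h2 : (q - a) * (φ y - φ x) ≤ ε := by
      have h3 : (q - a) * (φ y - φ x) ≤ δ * (φ y - φ x) := by nlinarith
      have h4 : δ * (φ y - φ x) ≤ δ * (φ y - φ x + 1) := by nlinarith
      have hne : φ y - φ x + 1 ≠ 0 := ne_of_gt (by linarith)
      have h5 : δ * (φ y - φ x + 1) = ε := by
        rw [hδ, div_mul_cancel₀ _ hne]
      linarith
    nlinarith [hdy, h1]
  constructor
  · exact convex_univ
  · intro x _ y _ a b ha hb hab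
    simp only [smul_eq_mul]
    rcases le_total x y with hxy | hyx
    · have := key x y hxy a ha (by linarith)
      have hb' : b = 1 - a := by linarith
      rw [hb']
      exact this
    · have := key y x hyx b hb (by linarith)
      have ha' : a = 1 - b := by linarith
      rw [ha']
      calc (1-b) * φ x + b * φ y = b * φ y + (1 - b) * φ x := by ring
        _ ≤ φ (b * y + (1 - b) * x) := this
        _ = φ ((1-b) * x + b * y) := by ring_nf

/-! ### Game-theoretic constructions -/

section cons
variable {S : Type} [Fintype S] (φ : S → ℝ → ℝ)
variable (h : ∀ (X : Type) [Fintype X] [Nonempty X] (U : X → S → ℝ),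
          NWD (Set.univ : Set S) U ⊆ NWD Set.univ (fun x s => φ s (U x s)))

include h in
lemma monoA (t : S) {a b : ℝ} (hab : a < b) : φ t a ≤ φ t b := by
  classical
  by_contra hlt
  push_neg at hlt
  set U : Fin 2 → S → ℝ := fun i s => if s = t then (if i = 0 then b else a) else 0 with hU
  clear_value U
  have hx : (0 : Fin 2) ∈ NWD (Set.univ : Set S) U := by
    simp only [NWD, Set.mem_setOf_eq]
    rintro ⟨p, ⟨hp0, hp1⟩, hge, s₀, -, hgt⟩
    rw [Fin.sum_univ_two] at hp1
    have hget := hge t (Set.mem_univ t)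
    rw [Fin.sum_univ_two] at hget
    have e0 : U 0 t = b := by simp [hU]
    have e1 : U 1 t = a := by simp [hU]
    rw [e0, e1] at hget
    have hba : (0:ℝ) < b - a := by linarith
    have hp1' : p 1 = 0 := by
      by_contra hne
      have hpos : 0 < p 1 := lt_of_le_of_ne (hp0 1) (Ne.symm hne)
      have hp0e : p 0 = 1 - p 1 := by linarith
      rw [hp0e] at hget
      nlinarith [mul_pos hba hpos]
    have hp0' : p 0 = 1 := by linarith
    rw [Fin.sum_univ_two, hp0', hp1'] at hgt
    simp at hgt
  have hx2 := h (Fin 2) U hx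
  apply hx2
  refine ⟨fun i => if i = 0 then 0 else 1, ⟨?_, ?_⟩, ?_, ⟨t, Set.mem_univ t, ?_⟩⟩
  · intro i; dsimp only; split <;> norm_num
  · rw [Fin.sum_univ_two]; norm_num
  · intro s _
    rw [Fin.sum_univ_two]
    simp only
    norm_num
    by_cases hs : s = t
    · subst hs
      simp only [hU, if_pos rfl]
      norm_num
      linarith
    · simp only [hU, if_neg hs]
      exact le_refl _
  · rw [Fin.sum_univ_two]
    simp only
    norm_num
    simp only [hU, if_pos rfl]
    norm_num
    linarith

include h in
lemma constB (t u : S) (hut : u ≠ t) {a b : ℝ} (hab : a < b) (heq : φ t a = φ t b)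
    (c d : ℝ) : φ u d ≤ φ u c := by
  classical
  by_contra hlt
  push_neg at hlt
  set U : Fin 2 → S → ℝ := fun i s =>
    if s = t then (if i = 0 then b else a)
    else if s = u then (if i = 0 then c else d) else 0 with hU
  clear_value U
  have hx : (0 : Fin 2) ∈ NWD (Set.univ : Set S) U := by
    simp only [NWD, Set.mem_setOf_eq]
    rintro ⟨p, ⟨hp0, hp1⟩, hge, s₀, -, hgt⟩
    rw [Fin.sum_univ_two] at hp1
    have hget := hge t (Set.mem_univ t)
    rw [Fin.sum_univ_two] at hget
    have e0 : U 0 t = b := by simp [hU]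
    have e1 : U 1 t = a := by simp [hU]
    rw [e0, e1] at hget
    have hba : (0:ℝ) < b - a := by linarith
    have hp1' : p 1 = 0 := by
      by_contra hne
      have hpos : 0 < p 1 := lt_of_le_of_ne (hp0 1) (Ne.symm hne)
      have hp0e : p 0 = 1 - p 1 := by linarith
      rw [hp0e] at hget
      nlinarith [mul_pos hba hpos]
    have hp0' : p 0 = 1 := by linarith
    rw [Fin.sum_univ_two, hp0', hp1'] at hgt
    simp at hgt
  have hx2 := h (Fin 2) U hx
  apply hx2
  refine ⟨fun i => if i = 0 then 0 else 1, ⟨?_, ?_⟩, ?_, ⟨u, Set.mem_univ u, ?_⟩⟩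
  · intro i; dsimp only; split <;> norm_num
  · rw [Fin.sum_univ_two]; norm_num
  · intro s _
    rw [Fin.sum_univ_two]
    simp only
    norm_num
    by_cases hs : s = t
    · subst hs
      simp only [hU, if_pos rfl]
      norm_num
      linarith [heq]
    · by_cases hs' : s = u
      · subst hs'
        simp only [hU, if_neg hs, if_pos rfl]
        norm_num
        linarith
      · simp only [hU, if_neg hs, if_neg hs']
        exact le_refl _
  · rw [Fin.sum_univ_two]
    simp only
    norm_num
    simp only [hU, if_neg hut, if_pos rfl]
    norm_num
    linarith

include h in
lemma midC (hS : 2 ≤ Fintype.card S) (hsm : ∀ s : S, StrictMono (φ s)) (t : S) (x y : ℝ) :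
    (φ t x + φ t y) / 2 ≤ φ t ((x + y) / 2) := by
  classical
  by_contra hcon
  push_neg at hcon
  have hxy : x ≠ y := by
    intro hxy
    subst hxy
    have : (x + x)/2 = x := by ring
    rw [this] at hcon
    linarith
  set a := min x y with ha
  set b := max x y with hb
  have hab : a < b := min_lt_max.mpr hxy
  have hsum : a + b = x + y := min_add_max x y
  have hφsum : φ t a + φ t b = φ t x + φ t y := by
    rcases le_total x y with hle | hle
    · rw [ha, hb, min_eq_left hle, max_eq_right hle]
    · rw [ha, hb, min_eq_right hle, max_eq_left hle]; ring
  have hcon' : φ t ((a + b)/2) < (φ t a + φ t b)/2 := by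
    rw [hsum, hφsum]; exact hcon
  have hφab : φ t a < φ t b := hsm t hab
  clear_value a b
  set ε : ℝ := (φ t a + φ t b)/2 - φ t ((a + b)/2) with hε
  have hεpos : 0 < ε := by rw [hε]; linarith
  set σ : ℝ := min (ε/(2*(φ t b - φ t a))) (1/4) with hσ
  have hσpos : 0 < σ := by
    apply lt_min
    · apply div_pos hεpos; linarith
    · norm_num
  have hσlt : σ ≤ 1/4 := min_le_right _ _
  clear_value ε
  have key1 : φ t ((a + b)/2) < (1/2 + σ) * φ t a + (1/2 - σ) * φ t b := by
    have h1 : σ * (φ t b - φ t a) ≤ ε/2 := by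
      have := min_le_left (ε/(2*(φ t b - φ t a))) (1/4)
      rw [← hσ] at this
      have h2 : (0:ℝ) < φ t b - φ t a := by linarith
      calc σ * (φ t b - φ t a) ≤ (ε/(2*(φ t b - φ t a))) * (φ t b - φ t a) := by
            apply mul_le_mul_of_nonneg_right this h2.le
        _ = ε/2 := by field_simp
    have : (1/2 + σ) * φ t a + (1/2 - σ) * φ t b
        = (φ t a + φ t b)/2 - σ * (φ t b - φ t a) := by ring
    rw [this]
    linarith [h1, hcon']
  clear_value σ
  set ρ : ℝ := (1/2 + σ)/(1/2 - σ) with hρdef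
  clear_value ρ
  have hhalf : (0:ℝ) < 1/2 - σ := by linarith
  have hρ : 1 < ρ := by
    rw [hρdef, lt_div_iff₀ hhalf]
    linarith
  obtain ⟨u, hut⟩ := Fintype.exists_ne_of_one_lt_card (by omega) t
  obtain ⟨c, k, hkpos, hchain⟩ := chainLemma (φ u)
    (hsm u (by norm_num)) (hsm u (by norm_num)) hρ
  have key2 : φ u c ≤ (1/2 + σ) * φ u (c + k) + (1/2 - σ) * φ u (c - k) := by
    have h1 : (1/2 - σ) * (φ u c - φ u (c - k)) ≤ (1/2 - σ) * (ρ * (φ u (c + k) - φ u c)) :=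
      mul_le_mul_of_nonneg_left hchain hhalf.le
    have hne : (1/2 - σ) ≠ 0 := ne_of_gt hhalf
    have h2 : (1/2 - σ) * ρ = 1/2 + σ := by
      rw [hρdef]; exact mul_div_cancel₀ _ hne
    have h3 : (1/2 - σ) * (ρ * (φ u (c + k) - φ u c))
        = (1/2 + σ) * (φ u (c + k) - φ u c) := by
      rw [← h2]; ring
    rw [h3] at h1
    linarith [h1]
  set U : Fin 3 → S → ℝ := fun i s =>
    if s = t then (if i = 0 then (a+b)/2 else if i = 1 then a else b)
    else if s = u then (if i = 0 then c else if i = 1 then c + k else c - k)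
    else 0 with hU
  clear_value U
  have et0 : U 0 t = (a+b)/2 := by simp [hU]
  have et1 : U 1 t = a := by simp [hU]
  have et2 : U 2 t = b := by simp [hU]
  have eu0 : U 0 u = c := by simp [hU, hut]
  have eu1 : U 1 u = c + k := by simp [hU, hut]
  have eu2 : U 2 u = c - k := by simp [hU, hut]
  have hx : (0 : Fin 3) ∈ NWD (Set.univ : Set S) U := by
    simp only [NWD, Set.mem_setOf_eq]
    rintro ⟨p, ⟨hp0, hp1⟩, hge, s₀, -, hgt⟩
    rw [Fin.sum_univ_three] at hp1
    have hget := hge t (Set.mem_univ t)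
    rw [Fin.sum_univ_three, et0, et1, et2] at hget
    have hgeu := hge u (Set.mem_univ u)
    rw [Fin.sum_univ_three, eu0, eu1, eu2] at hgeu
    have eu : c * p 0 + (c + k) * p 1 + (c - k) * p 2
        = c * (p 0 + p 1 + p 2) + k * (p 1 - p 2) := by ring
    rw [eu, hp1] at hgeu
    have et : (a+b)/2 * p 0 + a * p 1 + b * p 2
        = (a+b)/2 * (p 0 + p 1 + p 2) + ((b - a)/2) * (p 2 - p 1) := by ring
    rw [et, hp1] at hget
    have h12 : p 2 ≤ p 1 := by
      have hx1 : 0 ≤ k * (p 1 - p 2) := by linarith [hgeu]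
      by_contra hlt2
      push_neg at hlt2
      have : k * (p 1 - p 2) < 0 := mul_neg_of_pos_of_neg hkpos (by linarith)
      linarith
    have h21 : p 1 ≤ p 2 := by
      have hba2 : (0:ℝ) < (b - a)/2 := by linarith
      have hx1 : 0 ≤ (b - a)/2 * (p 2 - p 1) := by linarith [hget]
      by_contra hlt2
      push_neg at hlt2
      have : (b - a)/2 * (p 2 - p 1) < 0 := mul_neg_of_pos_of_neg hba2 (by linarith)
      linarith
    have hpe : p 1 = p 2 := le_antisymm h21 h12
    by_cases hs : s₀ = t
    · subst hs
      rw [Fin.sum_univ_three, et0, et1, et2, et, hp1] at hgt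
      rw [hpe] at hgt
      simp at hgt
    · by_cases hs' : s₀ = u
      · subst hs'
        rw [Fin.sum_univ_three, eu0, eu1, eu2, eu, hp1] at hgt
        rw [hpe] at hgt
        simp at hgt
      · have es0 : U 0 s₀ = 0 := by simp [hU, hs, hs']
        have es1 : U 1 s₀ = 0 := by simp [hU, hs, hs']
        have es2 : U 2 s₀ = 0 := by simp [hU, hs, hs']
        rw [Fin.sum_univ_three, es0, es1, es2] at hgt
        norm_num at hgt
  have hx2 := h (Fin 3) U hx
  apply hx2
  refine ⟨![0, 1/2 + σ, 1/2 - σ], ⟨?_, ?_⟩, ?_, ⟨t, Set.mem_univ t, ?_⟩⟩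
  · intro i
    fin_cases i <;> norm_num <;> linarith
  · rw [Fin.sum_univ_three]
    norm_num
    rw [show (![0, 1/2 + σ, 1/2 - σ] : Fin 3 → ℝ) 2 = 1/2 - σ from rfl]
    ring
  · intro s _
    rw [Fin.sum_univ_three]
    by_cases hs : s = t
    · subst hs
      simp only [et0, et1, et2]
      norm_num
      rw [show (![0, 1/2 + σ, 1/2 - σ] : Fin 3 → ℝ) 2 = 1/2 - σ from rfl]
      linarith [key1]
    · by_cases hs' : s = u
      · subst hs'
        simp only [eu0, eu1, eu2]
        norm_num
        rw [show (![0, 1/2 + σ, 1/2 - σ] : Fin 3 → ℝ) 2 = 1/2 - σ from rfl]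
        linarith [key2]
      · have es0 : U 0 s = 0 := by simp [hU, hs, hs']
        have es1 : U 1 s = 0 := by simp [hU, hs, hs']
        have es2 : U 2 s = 0 := by simp [hU, hs, hs']
        simp only [es0, es1, es2]
        norm_num
        rw [show (![0, 1/2 + σ, 1/2 - σ] : Fin 3 → ℝ) 2 = 1/2 - σ from rfl]
        linarith
  · rw [Fin.sum_univ_three]
    simp only [et0, et1, et2]
    norm_num
    rw [show (![0, 1/2 + σ, 1/2 - σ] : Fin 3 → ℝ) 2 = 1/2 - σ from rfl]
    linarith [key1]

end cons

theorem stmt12 {S : Type} [Fintype S] (hS : 2 ≤ Fintype.card S)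
    (φ : S → ℝ → ℝ)
    (h : ∀ (X : Type) [Fintype X] [Nonempty X] (U : X → S → ℝ),
          NWD (Set.univ : Set S) U ⊆ NWD Set.univ (fun x s => φ s (U x s))) :
    (∀ s, ConcaveOn ℝ Set.univ (φ s) ∧ StrictMono (φ s)) ∨
    (∀ s, ∀ a b : ℝ, φ s a = φ s b) := by
  by_cases hc : ∃ t : S, ∃ a b : ℝ, a < b ∧ φ t a = φ t b
  · right
    obtain ⟨t, a, b, hab, heq⟩ := hc
    have hconst : ∀ u : S, u ≠ t → ∀ c d : ℝ, φ u c = φ u d := by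
      intro u hut c d
      exact le_antisymm (constB φ h t u hut hab heq d c) (constB φ h t u hut hab heq c d)
    obtain ⟨u, hut⟩ := Fintype.exists_ne_of_one_lt_card (by omega) t
    have hu01 : φ u 0 = φ u 1 := hconst u hut 0 1
    have hconst2 : ∀ v : S, v ≠ u → ∀ c d : ℝ, φ v c = φ v d := by
      intro v hvu c d
      exact le_antisymm (constB φ h u v hvu (by norm_num : (0:ℝ) < 1) hu01 d c)
        (constB φ h u v hvu (by norm_num : (0:ℝ) < 1) hu01 c d)
    intro s c d
    by_cases hsu : s = u
    · subst hsu; exact hconst s hut c d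
    · exact hconst2 s hsu c d
  · left
    push_neg at hc
    have hsm : ∀ s : S, StrictMono (φ s) := by
      intro s p q hpq
      exact lt_of_le_of_ne (monoA φ h s hpq) (hc s p q hpq)
    intro s
    refine ⟨?_, hsm s⟩
    apply midpoint_concave (hsm s).monotone
    intro x y
    exact midC φ h hS hsm s x y
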